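/- Let X be the weighted magnetization X = π_{01}^{-1}(P_T(σ_x = 1 | σ(L))/α - 1) where π_{01} = (1-α)/α. Then E_T^1(X) = π_{01}·E_T(X²) and E_T^0(X) = -E_T(X²). -/

import Mathlib

open Finset

/-- For the weighted magnetization X = π₀₁⁻¹ (P_T(σ_x = 1 | σ(L))/α - 1) of the root
of a finite tree under the hardcore Gibbs measure, with π₀₁ = (1-α)/α:
E_T^1(X) = π₀₁ · E_T(X²) and E_T^0(X) = -E_T(X²). -/
theorem magnetization_conditional_means
    {Ω B : Type*} [Fintype Ω] [Fintype B] [DecidableEq B]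
    (w : Ω → ℝ) (hw : ∀ x, 0 ≤ w x) (hw1 : ∑ x, w x = 1)
    (r : Ω → Bool) (L : Ω → B) (α : ℝ)
    (hα : α = ∑ x ∈ univ.filter (fun x => r x = true), w x)
    (hα0 : 0 < α) (hα1 : α < 1)
    (hfiber : ∀ A : B, 0 < ∑ x ∈ univ.filter (fun x => L x = A), w x)
    -- posterior probability that the root is occupied given boundary configuration A
    (q : B → ℝ)
    (hq : ∀ A : B, q A = (∑ x ∈ univ.filter (fun x => L x = A ∧ r x = true), w x)
        / (∑ x ∈ univ.filter (fun x => L x = A), w x))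
    -- the weighted magnetization as a function of the configuration
    (X : Ω → ℝ)
    (hX : ∀ x, X x = ((1 - α)/α)⁻¹ * (q (L x) / α - 1)) :
    (∑ x ∈ univ.filter (fun x => r x = true), w x * X x) / α
        = ((1 - α)/α) * ∑ x, w x * (X x)^2
    ∧ (∑ x ∈ univ.filter (fun x => r x = false), w x * X x) / (1 - α)
        = -(∑ x, w x * (X x)^2) := by
  have hαne : α ≠ 0 := hα0.ne'
  have h1αne : (1 - α) ≠ 0 := by linarith
  set f : B → ℝ := fun A => ((1 - α)/α)⁻¹ * (q A / α - 1) with hf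
  set WA : B → ℝ := fun A => ∑ x ∈ univ.filter (fun x => L x = A), w x with hWA
  set SA : B → ℝ := fun A => ∑ x ∈ univ.filter (fun x => L x = A ∧ r x = true), w x with hSA
  -- general fiberwise decomposition
  have fib : ∀ (g : Ω → ℝ) (h : B → ℝ),
      ∑ x, g x * h (L x) = ∑ A, (∑ x ∈ univ.filter (fun x => L x = A), g x) * h A := by
    intro g h
    rw [← Finset.sum_fiberwise univ L (fun x => g x * h (L x))]
    refine Finset.sum_congr rfl fun A _ => ?_
    rw [Finset.sum_mul]
    refine Finset.sum_congr rfl fun x hx => ?_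
    simp only [Finset.mem_filter, Finset.mem_univ, true_and] at hx
    rw [hx]
  have hSAq : ∀ A, SA A = q A * WA A := by
    intro A
    rw [hq A]
    field_simp [(hfiber A).ne']
    simp only [hSA, hWA]
  have hfA : ∀ A, f A = (q A - α) / (1 - α) := by
    intro A
    simp only [hf]
    field_simp
  have sumW : ∑ A, WA A = 1 := (Finset.sum_fiberwise univ L w).trans hw1
  have sumS : ∑ A, SA A = α := by
    have := Finset.sum_fiberwise (univ.filter (fun x => r x = true)) L w
    rw [hα]
    rw [← this]
    refine Finset.sum_congr rfl fun A _ => ?_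
    simp only [hSA, Finset.filter_filter]
    apply Finset.sum_congr _ (fun _ _ => rfl)
    ext x
    simp [and_comm]
  -- key pointwise identities on fibers
  have keyW : ∀ A, (1 - α) * (WA A * f A) = SA A - α * WA A := by
    intro A
    rw [hSAq A, hfA A]
    field_simp
  have key : ∀ A, SA A * f A = (1 - α) * (WA A * (f A)^2) + α * (WA A * f A) := by
    intro A
    rw [hSAq A, hfA A]
    field_simp
    ring
  -- X as function of fiber
  have hXfun : ∀ x, X x = f (L x) := hX
  -- the three sums expressed fiberwise
  have hQ : ∑ x, w x * (X x)^2 = ∑ A, WA A * (f A)^2 := by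
    calc ∑ x, w x * (X x)^2 = ∑ x, w x * (fun A => (f A)^2) (L x) := by
          refine Finset.sum_congr rfl fun x _ => ?_
          rw [hXfun x]
      _ = ∑ A, WA A * (f A)^2 := fib w (fun A => (f A)^2)
  have hE : ∑ x, w x * X x = ∑ A, WA A * f A := by
    calc ∑ x, w x * X x = ∑ x, w x * f (L x) := by
          refine Finset.sum_congr rfl fun x _ => ?_
          rw [hXfun x]
      _ = ∑ A, WA A * f A := fib w f
  have hT : ∑ x ∈ univ.filter (fun x => r x = true), w x * X x = ∑ A, SA A * f A := by
    have h1 : ∑ x ∈ univ.filter (fun x => r x = true), w x * X x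
        = ∑ x, (if r x = true then w x else 0) * f (L x) := by
      rw [Finset.sum_filter]
      refine Finset.sum_congr rfl fun x _ => ?_
      rw [hXfun x]
      split <;> simp
    rw [h1, fib (fun x => if r x = true then w x else 0) f]
    refine Finset.sum_congr rfl fun A _ => ?_
    congr 1
    simp only [hSA]
    rw [← Finset.filter_filter, Finset.sum_filter]
    simp only [Finset.sum_filter]
  -- mean zero
  have hE0 : ∑ x, w x * X x = 0 := by
    have h : (1 - α) * ∑ x, w x * X x = 0 := by
      rw [hE, Finset.mul_sum]
      calc ∑ A, (1 - α) * (WA A * f A) = ∑ A, (SA A - α * WA A) :=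
            Finset.sum_congr rfl fun A _ => keyW A
        _ = (∑ A, SA A) - α * ∑ A, WA A := by
            rw [Finset.sum_sub_distrib, ← Finset.mul_sum]
        _ = 0 := by rw [sumS, sumW]; ring
    exact (mul_eq_zero.mp h).resolve_left h1αne
  have hE0' : ∑ A, WA A * f A = 0 := hE ▸ hE0
  have hTQ : ∑ x ∈ univ.filter (fun x => r x = true), w x * X x
      = (1 - α) * ∑ x, w x * (X x)^2 := by
    rw [hT, hQ]
    calc ∑ A, SA A * f A
        = ∑ A, ((1 - α) * (WA A * (f A)^2) + α * (WA A * f A)) :=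
          Finset.sum_congr rfl fun A _ => key A
      _ = (1 - α) * ∑ A, WA A * (f A)^2 + α * ∑ A, WA A * f A := by
          rw [Finset.sum_add_distrib, Finset.mul_sum, Finset.mul_sum]
      _ = (1 - α) * ∑ A, WA A * (f A)^2 := by rw [hE0']; ring
  constructor
  · rw [hTQ]
    field_simp
  · have hsplit := Finset.sum_filter_add_sum_filter_not univ
      (fun x => r x = true) (fun x => w x * X x)
    have hff : univ.filter (fun x => ¬ (r x = true)) = univ.filter (fun x => r x = false) := by
      simp [Bool.not_eq_true]
    rw [hff, hTQ] at hsplit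
    have hF : ∑ x ∈ univ.filter (fun x => r x = false), w x * X x
        = -((1 - α) * ∑ x, w x * (X x)^2) := by linarith [hE0]
    rw [hF]
    field_simp
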